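/- Let X₁,…,X_n (n ≥ 2) be i.i.d. with law P on ℝ^d, with augmented data (Xᵢ, Xᵢ'), and for α ∈ (0,1) let c_{1−α} be the resampling cutoff. Then c_{1−α} ≤ 2/(α(n−1)) holds with probability one, for every Borel probability measure P and every dimension d. -/

import Mathlib

open MeasureTheory Filter
open scoped ENNReal NNReal Classical RealInnerProductSpace

noncomputable section

/-- Euclidean space `ℝ^d`. -/
abbrev Euc (d : ℕ) := EuclideanSpace ℝ (Fin d)

/-- A Borel probability measure on `ℝ^d` is *spherically symmetric* if its pushforward under
every orthogonal transformation (equivalently, every linear isometry equivalence) equals itself. -/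
def sphSymm (d : ℕ) (P : Measure (Euc d)) : Prop :=
  ∀ f : Euc d ≃ₗᵢ[ℝ] Euc d, P.map f = P

/-- `μ` is the uniform distribution on the unit sphere `S^{d-1}`: the unique rotation-invariant
Borel probability measure supported on the unit sphere. -/
def isUnifSphere (d : ℕ) (μ : Measure (Euc d)) : Prop :=
  IsProbabilityMeasure μ ∧ μ (Metric.sphere (0 : Euc d) 1)ᶜ = 0 ∧
    ∀ f : Euc d ≃ₗᵢ[ℝ] Euc d, μ.map f = μ

/-- The law of `‖X‖ U` where `X ~ P` and `U ~ μU` are independent. -/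
def sphLaw (d : ℕ) (P μU : Measure (Euc d)) : Measure (Euc d) :=
  (P.prod μU).map (fun p => ‖p.1‖ • p.2)

/-- The kernel `K(x,y) = exp(-‖x-y‖²/(2d))`. -/
def Kf (d : ℕ) (x y : Euc d) : ℝ := Real.exp (-‖x - y‖ ^ 2 / (2 * (d : ℝ)))

/-- The joint law of the augmented pair `(X, ‖X‖U)`, `X ~ P`, `U ~ μU` independent. -/
def augLaw (d : ℕ) (P μU : Measure (Euc d)) : Measure (Euc d × Euc d) :=
  (P.prod μU).map (fun p => (p.1, ‖p.1‖ • p.2))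

/-- `ζ(P) = E K(X₁,X₂) + E K(X₁',X₂') - 2 E K(X₁,X₂')` where `(X₁,X₁'), (X₂,X₂')` are
i.i.d. augmented pairs. -/
def zetaE (d : ℕ) (P μU : Measure (Euc d)) : ℝ :=
  ∫ p, ∫ q, (Kf d p.1 q.1 + Kf d p.2 q.2 - 2 * Kf d p.1 q.2)
    ∂(augLaw d P μU) ∂(augLaw d P μU)

/-- The symmetrized U-statistic kernel `g`. -/
def gk (d : ℕ) (p q : Euc d × Euc d) : ℝ :=
  Kf d p.1 q.1 + Kf d p.2 q.2 - Kf d p.1 q.2 - Kf d q.1 p.2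

/-- The U-statistic `ζ̂_n` computed from augmented observations. -/
def zetaHat (d n : ℕ) (ω : Fin n → Euc d × Euc d) : ℝ :=
  ((n : ℝ) * ((n : ℝ) - 1) / 2)⁻¹ *
    ∑ i : Fin n, ∑ j : Fin n, if i < j then gk d (ω i) (ω j) else 0

/-- Law of the i.i.d. sample of augmented observations `(Xᵢ, Xᵢ') = (Xᵢ, ‖Xᵢ‖Uᵢ)`. -/
def sampleLaw (d n : ℕ) (P μU : Measure (Euc d)) : Measure (Fin n → Euc d × Euc d) :=
  Measure.pi fun _ => augLaw d P μU

/-- The resampled statistic `ζ̂_n(π)`: `Yᵢ = π(i)Xᵢ + (1-π(i))Xᵢ'` etc. -/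
def zetaHatPerm (d n : ℕ) (π : Fin n → Bool) (ω : Fin n → Euc d × Euc d) : ℝ :=
  zetaHat d n fun i => if π i then ω i else ((ω i).2, (ω i).1)

/-- The resampling p-value `p_n = 2^{-n} ∑_π I[ζ̂_n(π) ≥ ζ̂_n]`. -/
def pval (d n : ℕ) (ω : Fin n → Euc d × Euc d) : ℝ :=
  ((Finset.univ.filter fun π : Fin n → Bool =>
      zetaHat d n ω ≤ zetaHatPerm d n π ω).card : ℝ) / 2 ^ n

/-- The resampling cutoff `c_{1-α}`. -/
def cutoff (α : ℝ) (d n : ℕ) (ω : Fin n → Euc d × Euc d) : ℝ :=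
  sInf {t : ℝ | 1 - α ≤
    ((Finset.univ.filter fun π : Fin n → Bool =>
        zetaHatPerm d n π ω ≤ t).card : ℝ) / 2 ^ n}

/-- Characteristic function of a measure on `ℝ^d`. -/
def charFn (d : ℕ) (P : Measure (Euc d)) (t : Euc d) : ℂ :=
  ∫ x, Complex.exp (Complex.I * ((inner ℝ t x : ℝ) : ℂ)) ∂P

/-- Density of the `N(0, d⁻¹ I_d)` Gaussian on `ℝ^d`. -/
def gaussDens (d : ℕ) (t : Euc d) : ℝ :=
  ((d : ℝ) / (2 * Real.pi)) ^ ((d : ℝ) / 2) * Real.exp (-((d : ℝ) * ‖t‖ ^ 2) / 2)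

/-- `ζ(P)`, defined through characteristic functions. -/
def zetaCF (d : ℕ) (P μU : Measure (Euc d)) : ℝ :=
  ∫ t, ‖charFn d P t - charFn d (sphLaw d P μU) t‖ ^ 2 * gaussDens d t


lemma psd_pow {ι : Type*} [Fintype ι] (d k : ℕ) (y : ι → Euc d) (b : ι → ℝ) :
    0 ≤ ∑ i, ∑ j, b i * b j * (⟪y i, y j⟫ : ℝ) ^ k := by
  have h : ∀ i j : ι, (⟪y i, y j⟫ : ℝ) ^ k
      = ∑ g ∈ Fintype.piFinset (fun _ : Fin k => (Finset.univ : Finset (Fin d))),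
          (∏ s, y i (g s)) * (∏ s, y j (g s)) := by
    intro i j
    have : (⟪y i, y j⟫ : ℝ) = ∑ t, y i t * y j t := by
      simp [PiLp.inner_apply, RCLike.inner_apply, conj_trivial]
      exact Finset.sum_congr rfl fun _ _ => mul_comm _ _
    rw [this, Finset.sum_pow']
    exact Finset.sum_congr rfl fun g _ => by rw [← Finset.prod_mul_distrib]
  calc (0:ℝ) ≤ ∑ g ∈ Fintype.piFinset (fun _ : Fin k => (Finset.univ : Finset (Fin d))),
        (∑ i, b i * ∏ s, y i (g s)) ^ 2 :=
      Finset.sum_nonneg fun g _ => sq_nonneg _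
    _ = ∑ i, ∑ j, b i * b j * (⟪y i, y j⟫ : ℝ) ^ k := by
      simp_rw [h, sq, Finset.sum_mul_sum, Finset.mul_sum]
      rw [Finset.sum_comm]
      refine Finset.sum_congr rfl fun i _ => ?_
      rw [Finset.sum_comm]
      refine Finset.sum_congr rfl fun j _ => ?_
      refine Finset.sum_congr rfl fun g _ => by ring

lemma psd_expInner {ι : Type*} [Fintype ι] (d : ℕ) (y : ι → Euc d) (b : ι → ℝ) :
    0 ≤ ∑ i, ∑ j, b i * b j * Real.exp (⟪y i, y j⟫ : ℝ) := by
  have hexp : ∀ s : ℝ, Real.exp s = ∑' k : ℕ, s ^ k / (Nat.factorial k) := by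
    intro s
    rw [Real.exp_eq_exp_ℝ, NormedSpace.exp_eq_tsum_div]
  have hsummable : ∀ i j : ι, Summable (fun k : ℕ =>
      b i * b j * ((⟪y i, y j⟫ : ℝ) ^ k / (Nat.factorial k))) :=
    fun i j => (Real.summable_pow_div_factorial _).mul_left _
  calc (0:ℝ) ≤ ∑' k : ℕ, ∑ i, ∑ j, b i * b j * ((⟪y i, y j⟫ : ℝ) ^ k / (Nat.factorial k)) := by
        refine tsum_nonneg fun k => ?_
        have : ∑ i, ∑ j, b i * b j * ((⟪y i, y j⟫ : ℝ) ^ k / (Nat.factorial k))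
            = (↑((Nat.factorial k)) : ℝ)⁻¹ * ∑ i, ∑ j, b i * b j * (⟪y i, y j⟫ : ℝ) ^ k := by
          rw [Finset.mul_sum]
          refine Finset.sum_congr rfl fun i _ => ?_
          rw [Finset.mul_sum]
          exact Finset.sum_congr rfl fun j _ => by ring
        rw [this]
        exact mul_nonneg (by positivity) (psd_pow d k y b)
    _ = ∑ i, ∑ j, b i * b j * Real.exp (⟪y i, y j⟫ : ℝ) := by
        rw [Summable.tsum_finsetSum (fun i _ => summable_sum fun j _ => hsummable i j)]
        refine Finset.sum_congr rfl fun i _ => ?_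
        rw [Summable.tsum_finsetSum (fun j _ => hsummable i j)]
        refine Finset.sum_congr rfl fun j _ => ?_
        rw [hexp, ← tsum_mul_left]

lemma psd_Kf {ι : Type*} [Fintype ι] (d : ℕ) (y : ι → Euc d) (a : ι → ℝ) :
    0 ≤ ∑ i, ∑ j, a i * a j * Kf d (y i) (y j) := by
  rcases Nat.eq_zero_or_pos d with hd | hd
  · subst hd
    have : ∀ i j : ι, Kf 0 (y i) (y j) = 1 := by
      intro i j; simp [Kf]
    simp_rw [this, mul_one, ← Finset.sum_mul_sum]
    exact mul_self_nonneg _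
  · have hdpos : (0:ℝ) < d := by exact_mod_cast hd
    set c : ℝ := (Real.sqrt d)⁻¹ with hc
    have hc2 : c ^ 2 = (d:ℝ)⁻¹ := by
      rw [hc, inv_pow, Real.sq_sqrt hdpos.le]
    set u : ι → Euc d := fun i => c • y i with hu
    set f : ι → ℝ := fun i => Real.exp (-‖y i‖ ^ 2 / (2 * d)) with hf
    have key : ∀ i j : ι, a i * a j * Kf d (y i) (y j)
        = (a i * f i) * (a j * f j) * Real.exp (⟪u i, u j⟫ : ℝ) := by
      intro i j
      have hinner : (⟪u i, u j⟫ : ℝ) = ⟪y i, y j⟫ / d := by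
        rw [hu]
        rw [real_inner_smul_left, real_inner_smul_right, ← mul_assoc, ← sq, hc2]
        rw [inv_mul_eq_div]
      have hKf : Kf d (y i) (y j) = f i * f j * Real.exp ((⟪y i, y j⟫ : ℝ) / d) := by
        rw [Kf, hf, ← Real.exp_add, ← Real.exp_add]
        congr 1
        have hns : ‖y i - y j‖ ^ 2 = ‖y i‖ ^ 2 - 2 * (⟪y i, y j⟫ : ℝ) + ‖y j‖ ^ 2 :=
          norm_sub_sq_real _ _
        rw [hns]
        field_simp
        ring
      rw [hKf, hinner]; ring
    simp_rw [key]
    exact psd_expInner d u (fun i => a i * f i)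

lemma Kf_symm (d : ℕ) (x y : Euc d) : Kf d x y = Kf d y x := by
  unfold Kf; rw [norm_sub_rev]

lemma gk_symm (d : ℕ) (p q : Euc d × Euc d) : gk d p q = gk d q p := by
  unfold gk
  rw [Kf_symm d p.1 q.1, Kf_symm d p.2 q.2, Kf_symm d p.1 q.2, Kf_symm d q.1 p.2]
  ring

lemma gk_add_swap (d : ℕ) (p q : Euc d × Euc d) :
    gk d (p.2, p.1) q + gk d p q = 0 := by
  unfold gk
  simp only []
  rw [Kf_symm d q.1 p.2, Kf_symm d q.1 p.1]
  ring

lemma gk_self_le (d : ℕ) (p : Euc d × Euc d) : gk d p p ≤ 2 := by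
  unfold gk
  have h1 : Kf d p.1 p.1 = 1 := by simp [Kf]
  have h2 : Kf d p.2 p.2 = 1 := by simp [Kf]
  have h3 : 0 ≤ Kf d p.1 p.2 := (Real.exp_pos _).le
  have h4 : Kf d p.1 p.2 = Kf d p.2 p.1 := Kf_symm _ _ _
  rw [h1, h2]; linarith

lemma sum_gk_nonneg (d n : ℕ) (ω : Fin n → Euc d × Euc d) :
    0 ≤ ∑ i : Fin n, ∑ j : Fin n, gk d (ω i) (ω j) := by
  have h := psd_Kf (ι := Fin n ⊕ Fin n) d
    (Sum.elim (fun i => (ω i).1) (fun i => (ω i).2))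
    (Sum.elim (fun _ => 1) (fun _ => -1))
  rw [Fintype.sum_sum_type] at h
  simp only [Fintype.sum_sum_type, Sum.elim_inl, Sum.elim_inr, one_mul, neg_one_mul,
    neg_neg, mul_neg, mul_one, Finset.sum_neg_distrib, Finset.sum_add_distrib] at h
  have e : ∑ i : Fin n, ∑ j : Fin n, gk d (ω i) (ω j)
      = ∑ i : Fin n, ∑ j : Fin n, Kf d (ω i).1 (ω j).1
        + -∑ i : Fin n, ∑ j : Fin n, Kf d (ω i).1 (ω j).2
        + (-∑ i : Fin n, ∑ j : Fin n, Kf d (ω i).2 (ω j).1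
        + ∑ i : Fin n, ∑ j : Fin n, Kf d (ω i).2 (ω j).2) := by
    have e2 : ∑ i : Fin n, ∑ j : Fin n, Kf d (ω j).1 (ω i).2
        = ∑ i : Fin n, ∑ j : Fin n, Kf d (ω i).2 (ω j).1 := by
      exact Finset.sum_congr rfl fun i _ => Finset.sum_congr rfl fun j _ => Kf_symm _ _ _
    unfold gk
    simp only [Finset.sum_add_distrib, Finset.sum_sub_distrib]
    rw [e2]
    ring
  rw [e]
  exact h

lemma zetaHat_ge (d n : ℕ) (hn : 2 ≤ n) (ω : Fin n → Euc d × Euc d) :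
    -2 / ((n : ℝ) - 1) ≤ zetaHat d n ω := by
  have h2 : (2:ℝ) ≤ (n:ℝ) := by exact_mod_cast hn
  set T := ∑ i : Fin n, ∑ j : Fin n, if i < j then gk d (ω i) (ω j) else 0 with hT
  have hdecomp : ∑ i : Fin n, ∑ j : Fin n, gk d (ω i) (ω j)
      = T + T + ∑ i : Fin n, gk d (ω i) (ω i) := by
    calc ∑ i : Fin n, ∑ j : Fin n, gk d (ω i) (ω j)
        = ∑ i : Fin n, ∑ j : Fin n, ((if i < j then gk d (ω i) (ω j) else 0)
          + (if j < i then gk d (ω i) (ω j) else 0)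
          + (if i = j then gk d (ω i) (ω j) else 0)) := by
          refine Finset.sum_congr rfl fun i _ => Finset.sum_congr rfl fun j _ => ?_
          rcases lt_trichotomy i j with h | h | h
          · simp [h, asymm h, h.ne]
          · simp [h, lt_irrefl]
          · simp [h, asymm h, h.ne']
      _ = T + T + ∑ i : Fin n, gk d (ω i) (ω i) := by
          simp only [Finset.sum_add_distrib]
          congr 1
          · congr 1
            rw [Finset.sum_comm]
            refine Finset.sum_congr rfl fun i _ => Finset.sum_congr rfl fun j _ => ?_
            by_cases hij : i < j
            · simp [hij, gk_symm]
            · simp [hij]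
          · refine Finset.sum_congr rfl fun i _ => ?_
            simp
  have hpos := sum_gk_nonneg d n ω
  have hdiag : ∑ i : Fin n, gk d (ω i) (ω i) ≤ 2 * n := by
    calc ∑ i : Fin n, gk d (ω i) (ω i) ≤ ∑ _i : Fin n, (2:ℝ) :=
          Finset.sum_le_sum fun i _ => gk_self_le d _
      _ = 2 * n := by simp [mul_comm]
  have hTge : -(n:ℝ) ≤ T := by rw [hdecomp] at hpos; linarith
  have hc : (0:ℝ) < ((n:ℝ) * ((n:ℝ) - 1) / 2) := by nlinarith
  unfold zetaHat
  rw [← hT]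
  have heq : -2 / ((n:ℝ) - 1) = ((n:ℝ) * ((n:ℝ) - 1) / 2)⁻¹ * (-(n:ℝ)) := by
    have hn0 : (n:ℝ) ≠ 0 := by linarith
    have hn1 : (n:ℝ) - 1 ≠ 0 := by linarith
    field_simp
  rw [heq]
  exact mul_le_mul_of_nonneg_left hTge (inv_nonneg.mpr hc.le)

lemma sum_pair_zero (d n : ℕ) (ω : Fin n → Euc d × Euc d) {i j : Fin n} (hij : i ≠ j) :
    ∑ π : Fin n → Bool,
      gk d (if π i then ω i else ((ω i).2, (ω i).1))
           (if π j then ω j else ((ω j).2, (ω j).1)) = 0 := by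
  have key : ∀ (b : Bool) (p q : Euc d × Euc d),
      gk d (if b then p else (p.2, p.1)) q + gk d (if !b then p else (p.2, p.1)) q = 0 := by
    intro b p q
    cases b
    · simpa using gk_add_swap d p q
    · simpa [add_comm] using gk_add_swap d p q
  let F : (Fin n → Bool) → ℝ := fun π =>
    gk d (if π i then ω i else ((ω i).2, (ω i).1))
         (if π j then ω j else ((ω j).2, (ω j).1))
  let e : (Fin n → Bool) → (Fin n → Bool) := fun π => Function.update π i (!π i)
  have hinv : Function.Involutive e := by
    intro π; funext x
    by_cases hx : x = i
    · subst hx; simp [e]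
    · simp [e, Function.update_of_ne hx]
  have hcomp : ∑ π, F (e π) = ∑ π, F π := hinv.bijective.sum_comp F
  have hcancel : ∀ π, F π + F (e π) = 0 := by
    intro π
    have h1 : e π j = π j := Function.update_of_ne (Ne.symm hij) _ _
    have h2 : e π i = !π i := Function.update_self _ _ _
    show gk d (if π i then ω i else ((ω i).2, (ω i).1)) _
        + gk d (if e π i then ω i else ((ω i).2, (ω i).1))
            (if e π j then ω j else ((ω j).2, (ω j).1)) = 0
    rw [h1, h2]
    exact key (π i) (ω i) _
  have h2sum : (2:ℝ) * ∑ π, F π = 0 := by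
    have h3 : ∑ π, F π + ∑ π, F π = ∑ π, (F π + F (e π)) := by
      rw [Finset.sum_add_distrib, hcomp]
    rw [two_mul, h3]
    simp [hcancel]
  have : ∑ π, F π = 0 := by linarith
  exact this

lemma sum_perm_zero (d n : ℕ) (ω : Fin n → Euc d × Euc d) :
    ∑ π : Fin n → Bool, zetaHatPerm d n π ω = 0 := by
  unfold zetaHatPerm zetaHat
  rw [← Finset.mul_sum]
  have hz : ∑ π : Fin n → Bool, ∑ i : Fin n, ∑ j : Fin n,
      (if i < j then gk d (if π i then ω i else ((ω i).2, (ω i).1))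
        (if π j then ω j else ((ω j).2, (ω j).1)) else 0) = 0 := by
    rw [Finset.sum_comm]
    refine Finset.sum_eq_zero fun i _ => ?_
    rw [Finset.sum_comm]
    refine Finset.sum_eq_zero fun j _ => ?_
    by_cases hij : i < j
    · simp only [if_pos hij]
      exact sum_pair_zero d n ω hij.ne
    · simp [hij]
  rw [hz, mul_zero]

lemma cutoff_le (d n : ℕ) (hn : 2 ≤ n) (α : ℝ) (hα : α ∈ Set.Ioo (0:ℝ) 1)
    (ω : Fin n → Euc d × Euc d) :
    cutoff α d n ω ≤ 2 / (α * ((n : ℝ) - 1)) := by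
  obtain ⟨hα0, hα1⟩ := hα
  have h2 : (2:ℝ) ≤ (n:ℝ) := by exact_mod_cast hn
  have hn1 : (0:ℝ) < (n:ℝ) - 1 := by linarith
  set v : (Fin n → Bool) → ℝ := fun π => zetaHatPerm d n π ω with hv
  set m : ℝ := 2 / ((n:ℝ) - 1) with hm
  set t : ℝ := 2 / (α * ((n:ℝ) - 1)) with ht
  have hm0 : 0 < m := by positivity
  have ht0 : 0 < t := by positivity
  have hvlb : ∀ π, -m ≤ v π := by
    intro π
    have h := zetaHat_ge d n hn (fun i => if π i then ω i else ((ω i).2, (ω i).1))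
    have : v π = zetaHat d n (fun i => if π i then ω i else ((ω i).2, (ω i).1)) := rfl
    rw [this, hm]
    simpa [neg_div] using h
  have hvsum : ∑ π, v π = 0 := sum_perm_zero d n ω
  have hcard : (Fintype.card (Fin n → Bool) : ℝ) = 2 ^ n := by
    simp [Fintype.card_fun]
  have h2n : (0:ℝ) < 2 ^ n := by positivity
  set S : Set ℝ := {s : ℝ | 1 - α ≤
    ((Finset.univ.filter fun π : Fin n → Bool => v π ≤ s).card : ℝ) / 2 ^ n} with hS
  set B : Finset (Fin n → Bool) := Finset.univ.filter fun π => ¬ (v π ≤ t) with hB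
  have hBsum : (B.card : ℝ) * (t + m) ≤ (2:ℝ) ^ n * m := by
    have h1 : (B.card : ℝ) * (t + m) ≤ ∑ π ∈ B, (v π + m) := by
      have h := Finset.card_nsmul_le_sum B (fun π => v π + m) (t + m) ?_
      · simpa [nsmul_eq_mul, mul_add] using h
      · intro π hπ
        have hlt := lt_of_not_ge (Finset.mem_filter.mp hπ).2
        change t + m ≤ v π + m
        linarith
    have h2' : ∑ π ∈ B, (v π + m) ≤ ∑ π : Fin n → Bool, (v π + m) :=
      Finset.sum_le_sum_of_subset_of_nonneg (Finset.subset_univ B)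
        (fun π _ _ => by linarith [hvlb π])
    have h3 : ∑ π : Fin n → Bool, (v π + m) = (2:ℝ)^n * m := by
      rw [Finset.sum_add_distrib, hvsum, Finset.sum_const, Finset.card_univ,
        nsmul_eq_mul, hcard, zero_add]
    linarith
  have hBbound : (B.card : ℝ) ≤ α * 2 ^ n := by
    have htm : t + m = m * (1 + α) / α := by
      rw [ht, hm]; field_simp
    have hfrac : (2:ℝ)^n * m / (t + m) = 2^n * (α / (1 + α)) := by
      rw [htm]; field_simp
    have hbc : (B.card : ℝ) ≤ 2^n * m / (t + m) := by
      rw [le_div_iff₀ (by linarith)]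
      exact hBsum
    have hle : (2:ℝ)^n * (α / (1+α)) ≤ α * 2^n := by
      have h1a : α / (1+α) ≤ α := by
        rw [div_le_iff₀ (by linarith)]
        nlinarith
      nlinarith
    calc (B.card : ℝ) ≤ 2^n * m / (t + m) := hbc
      _ = 2^n * (α / (1+α)) := hfrac
      _ ≤ α * 2^n := hle
  have htS : t ∈ S := by
    rw [hS, Set.mem_setOf_eq]
    have hkey := Finset.card_filter_add_card_filter_not
      (s := (Finset.univ : Finset (Fin n → Bool))) (p := fun π => v π ≤ t)
    have hBeq : (Finset.filter (fun a => ¬ (fun π => v π ≤ t) a) Finset.univ).card = B.card := by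
      rw [hB]
    have h' : ((Finset.univ.filter fun π => v π ≤ t).card : ℝ) + B.card = 2^n := by
      rw [hBeq] at hkey
      rw [Finset.card_univ] at hkey
      rw [← hcard, ← Nat.cast_add, hkey]
    rw [le_div_iff₀ h2n]
    nlinarith
  have hbdd : BddBelow S := by
    refine ⟨-m, fun s hs => ?_⟩
    rw [hS, Set.mem_setOf_eq] at hs
    have h1α : (0:ℝ) < 1 - α := by linarith
    have hge : (1 - α) * 2^n ≤ ((Finset.univ.filter fun π => v π ≤ s).card : ℝ) :=
      (le_div_iff₀ h2n).mp hs
    have hpos : (0:ℝ) < ((Finset.univ.filter fun π => v π ≤ s).card : ℝ) := by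
      nlinarith
    have hne : (Finset.univ.filter fun π : Fin n → Bool => v π ≤ s).Nonempty := by
      rw [← Finset.card_pos]
      exact_mod_cast hpos
    obtain ⟨π, hπ⟩ := hne
    have hπs := (Finset.mem_filter.mp hπ).2
    linarith [hvlb π]
  exact csInf_le hbdd htS


/-- Deterministic bound on the resampling cutoff:
`c_{1-α} ≤ 2/(α(n-1))` holds with probability one, for every `P` and every `d`. -/
theorem cutoff_bound
    (d n : ℕ) (hn : 2 ≤ n) (P μU : Measure (Euc d)) [IsProbabilityMeasure P]
    (hμU : isUnifSphere d μU) (α : ℝ) (hα : α ∈ Set.Ioo (0:ℝ) 1) :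
    ∀ᵐ ω ∂(sampleLaw d n P μU), cutoff α d n ω ≤ 2 / (α * ((n : ℝ) - 1)) :=
  ae_of_all _ fun ω => cutoff_le d n hn α hα ω

end
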